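/- Let G be a finite group and N a normal subgroup. Identify Irr(G/N) with {χ ∈ Irr(G) : N ⊆ ker χ} = {χ₁,…,χ_s} ⊆ Irr(G) = {χ₁,…,χᵣ}. Then the monoid M(G/N) of sums of monomial characters of G/N, viewed inside ℕ^r via this identification, equals M(G) ∩ ℕ^s, i.e. R_{G/N} = R_G ∩ K[x₁,…,x_s]. -/

import Mathlib

open scoped Classical BigOperators

variable {G : Type} [Group G] [Fintype G]

noncomputable def inducedChar (H : Subgroup G) (lam : H →* ℂ) : G → ℂ :=
  fun g => (Nat.card H : ℂ)⁻¹ *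
    ∑ x : G, if h : x⁻¹ * g * x ∈ H then lam ⟨x⁻¹ * g * x, h⟩ else 0

def IsMonomialChar (f : G → ℂ) : Prop :=
  ∃ (H : Subgroup G) (lam : H →* ℂ), f = inducedChar H lam

def IsIrrChar (f : G → ℂ) : Prop :=
  ∃ V : FDRep ℂ G, CategoryTheory.Simple V ∧ f = V.character

noncomputable def innerChar (f g : G → ℂ) : ℂ :=
  (Nat.card G : ℂ)⁻¹ * ∑ x : G, f x * (starRingEnd ℂ) (g x)

section Aux

variable (N : Subgroup G) [N.Normal] [Fintype (G ⧸ N)]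

private lemma card_ne_zero_C (α : Type*) [Finite α] [Nonempty α] : (Nat.card α : ℂ) ≠ 0 := by
  exact_mod_cast (Nat.card_pos (α := α)).ne'

/-- averaging a function over the normal subgroup N -/
private noncomputable def avgN (f : G → ℂ) : G → ℂ :=
  fun g => (Nat.card N : ℂ)⁻¹ * ∑ n : N, f (g * n)

private lemma avgN_add (f₁ f₂ : G → ℂ) : avgN N (f₁ + f₂) = avgN N f₁ + avgN N f₂ := by
  funext g
  show (Nat.card N : ℂ)⁻¹ * ∑ n : N, (f₁ (g * n) + f₂ (g * n)) = _
  rw [Finset.sum_add_distrib, mul_add]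
  rfl

private lemma avgN_zero : avgN N (0 : G → ℂ) = 0 := by
  funext g
  show (Nat.card N : ℂ)⁻¹ * ∑ _n : N, (0 : ℂ) = 0
  simp

private lemma avgN_of_invariant (f : G → ℂ) (hf : ∀ g : G, ∀ n ∈ N, f (g * n) = f g) :
    avgN N f = f := by
  funext g
  show (Nat.card N : ℂ)⁻¹ * ∑ n : N, f (g * n) = f g
  have h1 : ∀ n : N, f (g * n) = f g := fun n => hf g n n.2
  rw [Finset.sum_congr rfl (fun n _ => h1 n), Finset.sum_const, nsmul_eq_mul]
  rw [Finset.card_univ, ← Nat.card_eq_fintype_card, ← mul_assoc,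
    inv_mul_cancel₀ (card_ne_zero_C N), one_mul]

/-- coset decomposition equivalence -/
private noncomputable def cosetEquiv : (G ⧸ N) × N ≃ G where
  toFun p := (Quotient.out p.1) * (p.2 : G)
  invFun x := (QuotientGroup.mk x,
    ⟨(Quotient.out (QuotientGroup.mk x : G ⧸ N))⁻¹ * x,
      QuotientGroup.eq.mp (QuotientGroup.out_eq' (QuotientGroup.mk x : G ⧸ N))⟩)
  left_inv p := by
    obtain ⟨y, n⟩ := p
    have h1 : (QuotientGroup.mk ((Quotient.out y) * (n : G)) : G ⧸ N) = y := by
      rw [QuotientGroup.mk_mul_of_mem _ n.2, QuotientGroup.out_eq']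
    refine Prod.ext h1 (Subtype.ext ?_)
    show (Quotient.out (QuotientGroup.mk ((Quotient.out y) * (n : G)) : G ⧸ N))⁻¹ *
      ((Quotient.out y) * (n : G)) = (n : G)
    rw [h1]
    group
  right_inv x := by simp

/-- summing a function of the coset over the whole group -/
private lemma sum_mk (F : G ⧸ N → ℂ) :
    ∑ x : G, F (QuotientGroup.mk x) = (Nat.card N : ℂ) * ∑ y : G ⧸ N, F y := by
  rw [← Equiv.sum_comp (cosetEquiv N) (fun x => F (QuotientGroup.mk x))]
  have h1 : ∀ p : (G ⧸ N) × N,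
      F (QuotientGroup.mk (cosetEquiv N p)) = F p.1 := by
    intro p
    congr 1
    show (QuotientGroup.mk ((Quotient.out p.1) * (p.2 : G)) : G ⧸ N) = p.1
    rw [QuotientGroup.mk_mul_of_mem _ p.2.2, QuotientGroup.out_eq']
  rw [Finset.sum_congr rfl (fun p _ => h1 p), Fintype.sum_prod_type]
  rw [Finset.mul_sum]
  refine Finset.sum_congr rfl fun y _ => ?_
  show ∑ _n : N, F y = _
  rw [Finset.sum_const, nsmul_eq_mul, Finset.card_univ, ← Nat.card_eq_fintype_card]

/-- conjugation by x⁻¹ as an equivalence of N -/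
private def conjEquiv (x : G) : N ≃ N where
  toFun n := ⟨x⁻¹ * n * x, by
    simpa using Subgroup.Normal.conj_mem ‹N.Normal› n n.2 x⁻¹⟩
  invFun n := ⟨x * n * x⁻¹, Subgroup.Normal.conj_mem ‹N.Normal› n n.2 x⟩
  left_inv n := by ext; simp [mul_assoc]
  right_inv n := by ext; simp [mul_assoc]

/-- inner sum in the averaged induced character -/
private noncomputable def Ssum (H : Subgroup G) (lam : H →* ℂ) (a : G) : ℂ :=
  ∑ m : N, if h : a * (m : G) ∈ H then lam ⟨a * m, h⟩ else 0

private lemma avg_induced_eq_S (H : Subgroup G) (lam : H →* ℂ) (g : G) :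
    avgN N (inducedChar H lam) g =
      (Nat.card N : ℂ)⁻¹ * (Nat.card H : ℂ)⁻¹ *
        ∑ x : G, Ssum N H lam (x⁻¹ * g * x) := by
  show (Nat.card N : ℂ)⁻¹ * ∑ n : N, inducedChar H lam (g * n) = _
  have h1 : ∀ n : N, inducedChar H lam (g * n)
      = (Nat.card H : ℂ)⁻¹ * ∑ x : G,
          (if h : x⁻¹ * (g * n) * x ∈ H then lam ⟨x⁻¹ * (g * n) * x, h⟩ else 0) := fun n => rfl
  rw [Finset.sum_congr rfl (fun n _ => h1 n), ← Finset.mul_sum, ← mul_assoc]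
  congr 1
  rw [Finset.sum_comm]
  refine Finset.sum_congr rfl fun x _ => ?_
  refine Fintype.sum_equiv (conjEquiv N x) _ _ fun n => ?_
  have key : x⁻¹ * (g * n) * x = (x⁻¹ * g * x) * (x⁻¹ * (n : G) * x) := by group
  have hco : ((conjEquiv N x n : N) : G) = x⁻¹ * (n : G) * x := rfl
  simp only [hco, key]

private lemma Ssum_of_not_ker (H : Subgroup G) (lam : H →* ℂ)
    (hker : ¬ ∀ h : H, (h : G) ∈ N → lam h = 1) (a : G) : Ssum N H lam a = 0 := by
  push_neg at hker
  obtain ⟨h₀, hN, hne⟩ := hker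
  set n₀ : N := ⟨(h₀ : G), hN⟩ with hn₀
  have key : Ssum N H lam a = Ssum N H lam a * lam h₀ := by
    conv_lhs => rw [Ssum, ← Equiv.sum_comp (Equiv.mulRight n₀)
      (fun m : N => if h : a * (m : G) ∈ H then lam ⟨a * m, h⟩ else 0)]
    rw [Ssum, Finset.sum_mul]
    refine Finset.sum_congr rfl fun m _ => ?_
    have hco : ((Equiv.mulRight n₀ m : N) : G) = (m : G) * (h₀ : G) := rfl
    have hmul : a * ((m : G) * (h₀ : G)) = (a * (m : G)) * (h₀ : G) := by group
    simp only [hco, hmul]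
    by_cases hm : a * (m : G) ∈ H
    · rw [dif_pos hm, dif_pos (H.mul_mem hm h₀.2)]
      have : (⟨a * (m : G) * (h₀ : G), H.mul_mem hm h₀.2⟩ : H)
          = (⟨a * (m : G), hm⟩ : H) * h₀ := rfl
      rw [this, map_mul]
    · rw [dif_neg hm, dif_neg (fun hc => hm (by
        have := H.mul_mem hc (H.inv_mem h₀.2)
        simpa [mul_assoc] using this)), zero_mul]
  have := sub_eq_zero.mpr key
  have h2 : Ssum N H lam a * (1 - lam h₀) = 0 := by ring_nf; ring_nf at this; linear_combination this
  rcases mul_eq_zero.mp h2 with h | h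
  · exact h
  · exact absurd (by linear_combination -h : lam h₀ = 1) hne

end Aux

section Case1

variable (N : Subgroup G) [N.Normal] [Fintype (G ⧸ N)]

private noncomputable def lamBar (H : Subgroup G) (lam : H →* ℂ)
    (hker : ∀ h : H, (h : G) ∈ N → lam h = 1) :
    (H.map (QuotientGroup.mk' N)) →* ℂ :=
  (Units.coeHom ℂ).comp <|
    (QuotientGroup.lift ((QuotientGroup.mk' N).subgroupMap H).ker lam.toHomUnits
      (by
        intro x hx
        have hx1 : QuotientGroup.mk (x : G) = (1 : G ⧸ N) := by
          have := Subtype.ext_iff.mp hx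
          exact this
        have hxN : (x : G) ∈ N := (QuotientGroup.eq_one_iff _).mp hx1
        exact Units.ext (by simpa using hker x hxN))).comp
      (QuotientGroup.quotientKerEquivOfSurjective _
        ((QuotientGroup.mk' N).subgroupMap_surjective H)).symm.toMonoidHom

private lemma lamBar_apply (H : Subgroup G) (lam : H →* ℂ)
    (hker : ∀ h : H, (h : G) ∈ N → lam h = 1) (x : G) (hx : x ∈ H)
    (hy : (QuotientGroup.mk x : G ⧸ N) ∈ H.map (QuotientGroup.mk' N)) :
    lamBar N H lam hker ⟨QuotientGroup.mk x, hy⟩ = lam ⟨x, hx⟩ := by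
  have hs := (QuotientGroup.mk' N).subgroupMap_surjective H
  set π := (QuotientGroup.mk' N).subgroupMap H with hπ
  have h2 : (QuotientGroup.quotientKerEquivOfSurjective π hs).symm (π ⟨x, hx⟩)
      = QuotientGroup.mk (⟨x, hx⟩ : H) := by
    rw [MulEquiv.symm_apply_eq]
    rfl
  calc lamBar N H lam hker ⟨QuotientGroup.mk x, hy⟩
      = lamBar N H lam hker (π ⟨x, hx⟩) := rfl
    _ = lam ⟨x, hx⟩ := by
        simp only [lamBar, MonoidHom.comp_apply, MulEquiv.coe_toMonoidHom]
        rw [h2]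
        rfl

end Case1

section Rest

variable (N : Subgroup G) [N.Normal] [Fintype (G ⧸ N)]

private lemma coeff_calc (a b cc S : ℂ) (ha : a ≠ 0) (hc : cc ≠ 0) (hb : b ≠ 0) :
    a⁻¹ * (b * cc)⁻¹ * (cc * (a * S)) = b⁻¹ * S := by
  field_simp

private lemma coeff_calc2 (a b S : ℂ) (ha : a ≠ 0) (hb : b ≠ 0) :
    b⁻¹ * S = (b * a)⁻¹ * (a * S) := by
  field_simp

private lemma Ssum_of_ker (H : Subgroup G) (lam : H →* ℂ)
    (hker : ∀ h : H, (h : G) ∈ N → lam h = 1) (a : G) :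
    Ssum N H lam a =
      if ha : (QuotientGroup.mk a : G ⧸ N) ∈ H.map (QuotientGroup.mk' N) then
        (Nat.card {h : H // (h : G) ∈ N} : ℂ) *
          lamBar N H lam hker ⟨QuotientGroup.mk a, ha⟩
      else 0 := by
  by_cases ha : (QuotientGroup.mk a : G ⧸ N) ∈ H.map (QuotientGroup.mk' N)
  · rw [dif_pos ha]
    have ha' := ha
    obtain ⟨h, hH, hh⟩ := ha'
    have hn₀ : h⁻¹ * a ∈ N := QuotientGroup.eq.mp hh
    set L := lamBar N H lam hker ⟨QuotientGroup.mk a, ha⟩ with hL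
    have hterm : ∀ m : N,
        (if hm : a * (m : G) ∈ H then lam ⟨a * m, hm⟩ else 0)
          = if a * (m : G) ∈ H then L else 0 := by
      intro m
      by_cases hm : a * (m : G) ∈ H
      · rw [dif_pos hm, if_pos hm]
        have hy' : (QuotientGroup.mk (a * (m : G)) : G ⧸ N) ∈ H.map (QuotientGroup.mk' N) :=
          ⟨a * (m : G), hm, rfl⟩
        rw [← lamBar_apply N H lam hker (a * (m : G)) hm hy']
        exact congrArg _ (Subtype.ext (QuotientGroup.mk_mul_of_mem a m.2))
      · rw [dif_neg hm, if_neg hm]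
    rw [Ssum, Finset.sum_congr rfl (fun m _ => hterm m)]
    have hstep : ∀ m : N,
        (if a * ((m : G)) ∈ H then L else 0)
          = (fun k : N => if ((k : G)) ∈ H then L else 0) ((Equiv.mulLeft (⟨h⁻¹ * a, hn₀⟩ : N)) m) := by
      intro m
      have hco : (((Equiv.mulLeft (⟨h⁻¹ * a, hn₀⟩ : N)) m : N) : G) = h⁻¹ * a * (m : G) := rfl
      simp only [hco]
      refine if_congr ?_ rfl rfl
      rw [mul_assoc, mul_mem_cancel_left (H.inv_mem hH)]
    rw [Fintype.sum_equiv (Equiv.mulLeft (⟨h⁻¹ * a, hn₀⟩ : N)) _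
      (fun k : N => if ((k : G)) ∈ H then L else 0) hstep]
    rw [← Finset.sum_filter, Finset.sum_const, nsmul_eq_mul]
    congr 1
    rw [← Fintype.card_subtype, ← Nat.card_eq_fintype_card]
    norm_cast
    exact Nat.card_congr
      { toFun := fun m => ⟨⟨(m.1 : G), m.2⟩, m.1.2⟩
        invFun := fun h => ⟨⟨(h.1 : G), h.2⟩, h.1.2⟩
        left_inv := fun _ => rfl
        right_inv := fun _ => rfl }
  · rw [dif_neg ha, Ssum]
    refine Finset.sum_eq_zero fun m _ => ?_
    exact dif_neg fun hmem => ha ⟨a * (m : G), hmem, QuotientGroup.mk_mul_of_mem a m.2⟩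

private lemma card_aux (H : Subgroup G) :
    Nat.card H = Nat.card (H.map (QuotientGroup.mk' N)) * Nat.card {h : H // (h : G) ∈ N} := by
  have hs := (QuotientGroup.mk' N).subgroupMap_surjective H
  set π := (QuotientGroup.mk' N).subgroupMap H with hπ
  rw [Subgroup.card_eq_card_quotient_mul_card_subgroup π.ker]
  congr 1
  · exact Nat.card_congr (QuotientGroup.quotientKerEquivOfSurjective π hs).toEquiv
  · refine Nat.card_congr (Equiv.subtypeEquivRight fun h => ?_)
    rw [MonoidHom.mem_ker]
    constructor
    · intro hk
      exact (QuotientGroup.eq_one_iff _).mp (Subtype.ext_iff.mp hk)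
    · intro hN
      exact Subtype.ext ((QuotientGroup.eq_one_iff _).mpr hN)

private lemma avg_induced_of_ker (H : Subgroup G) (lam : H →* ℂ)
    (hker : ∀ h : H, (h : G) ∈ N → lam h = 1) :
    avgN N (inducedChar H lam) =
      (inducedChar (H.map (QuotientGroup.mk' N)) (lamBar N H lam hker)) ∘
        (QuotientGroup.mk : G → G ⧸ N) := by
  funext g
  rw [Function.comp_apply, avg_induced_eq_S]
  set Hb := H.map (QuotientGroup.mk' N) with hHb
  set c : ℕ := Nat.card {h : H // (h : G) ∈ N} with hc
  have hF : ∀ x : G, Ssum N H lam (x⁻¹ * g * x) =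
      (c : ℂ) * ((fun y : G ⧸ N =>
        if h : y⁻¹ * QuotientGroup.mk g * y ∈ Hb
        then lamBar N H lam hker ⟨y⁻¹ * QuotientGroup.mk g * y, h⟩ else 0)
          (QuotientGroup.mk x)) := by
    intro x
    rw [Ssum_of_ker N H lam hker]
    have hq : (QuotientGroup.mk (x⁻¹ * g * x) : G ⧸ N)
        = (QuotientGroup.mk x : G ⧸ N)⁻¹ * QuotientGroup.mk g * QuotientGroup.mk x := by
      simp
    simp only [hq, mul_dite, mul_zero]
    rfl
  rw [Finset.sum_congr rfl (fun x _ => hF x), ← Finset.mul_sum]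
  rw [sum_mk N (fun y : G ⧸ N =>
        if h : y⁻¹ * QuotientGroup.mk g * y ∈ Hb
        then lamBar N H lam hker ⟨y⁻¹ * QuotientGroup.mk g * y, h⟩ else 0)]
  show (Nat.card N : ℂ)⁻¹ * (Nat.card H : ℂ)⁻¹ * ((c : ℂ) * ((Nat.card N : ℂ) * _))
      = (Nat.card Hb : ℂ)⁻¹ * _
  have h6 : (Nat.card H : ℂ) = (Nat.card Hb : ℂ) * (c : ℂ) := by
    rw [hHb, hc]
    exact_mod_cast congrArg (fun n : ℕ => (n : ℂ)) (card_aux N H)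
  have n1 : (Nat.card N : ℂ) ≠ 0 := card_ne_zero_C N
  have n2 : (Nat.card Hb : ℂ) ≠ 0 := card_ne_zero_C Hb
  have n3 : (c : ℂ) ≠ 0 := by
    have : Nonempty {h : H // (h : G) ∈ N} := ⟨⟨1, N.one_mem⟩⟩
    exact card_ne_zero_C _
  rw [h6]
  exact coeff_calc _ _ _ _ n1 n3 n2

private lemma avg_induced_of_not_ker (H : Subgroup G) (lam : H →* ℂ)
    (hker : ¬ ∀ h : H, (h : G) ∈ N → lam h = 1) :
    avgN N (inducedChar H lam) = 0 := by
  funext g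
  rw [avg_induced_eq_S]
  rw [Finset.sum_congr rfl (fun x _ => Ssum_of_not_ker N H lam hker (x⁻¹ * g * x))]
  simp

private def homToBar (Hb : Subgroup (G ⧸ N)) :
    (Hb.comap (QuotientGroup.mk' N)) →* Hb where
  toFun h := ⟨QuotientGroup.mk (h : G), h.2⟩
  map_one' := rfl
  map_mul' _ _ := rfl

private lemma infl_monomial (Hb : Subgroup (G ⧸ N)) (lam : Hb →* ℂ) :
    (inducedChar Hb lam) ∘ (QuotientGroup.mk : G → G ⧸ N)
      = inducedChar (Hb.comap (QuotientGroup.mk' N)) (lam.comp (homToBar N Hb)) := by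
  funext g
  rw [Function.comp_apply]
  set H := Hb.comap (QuotientGroup.mk' N) with hH
  have hx : ∀ x : G,
      (if h : x⁻¹ * g * x ∈ H then (lam.comp (homToBar N Hb)) ⟨x⁻¹ * g * x, h⟩ else 0)
        = (fun y : G ⧸ N =>
            if h : y⁻¹ * QuotientGroup.mk g * y ∈ Hb
            then lam ⟨y⁻¹ * QuotientGroup.mk g * y, h⟩ else 0) (QuotientGroup.mk x) := by
    intro x
    have hq : (QuotientGroup.mk (x⁻¹ * g * x) : G ⧸ N)
        = (QuotientGroup.mk x : G ⧸ N)⁻¹ * QuotientGroup.mk g * QuotientGroup.mk x := by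
      simp
    show (if h : (QuotientGroup.mk (x⁻¹ * g * x) : G ⧸ N) ∈ Hb
        then lam ⟨QuotientGroup.mk (x⁻¹ * g * x), h⟩ else 0) = _
    simp only [hq]
  show inducedChar Hb lam (QuotientGroup.mk g) = (Nat.card H : ℂ)⁻¹ * ∑ x : G, _
  rw [Finset.sum_congr rfl (fun x _ => hx x)]
  rw [sum_mk N (fun y : G ⧸ N =>
        if h : y⁻¹ * QuotientGroup.mk g * y ∈ Hb
        then lam ⟨y⁻¹ * QuotientGroup.mk g * y, h⟩ else 0)]
  show (Nat.card Hb : ℂ)⁻¹ * _ = (Nat.card H : ℂ)⁻¹ * ((Nat.card N : ℂ) * _)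
  have hmapeq : H.map (QuotientGroup.mk' N) = Hb :=
    Subgroup.map_comap_eq_self_of_surjective (QuotientGroup.mk'_surjective N) Hb
  have hker : {h : H // (h : G) ∈ N} ≃ N :=
    { toFun := fun h => ⟨(h : G), h.2⟩
      invFun := fun n => ⟨⟨(n : G), by
        show QuotientGroup.mk' N (n : G) ∈ Hb
        have : QuotientGroup.mk' N (n : G) = 1 := (QuotientGroup.eq_one_iff _).mpr n.2
        rw [this]; exact Hb.one_mem⟩, n.2⟩
      left_inv := fun _ => rfl
      right_inv := fun _ => rfl }
  have h6 : (Nat.card H : ℂ) = (Nat.card Hb : ℂ) * (Nat.card N : ℂ) := by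
    have := card_aux N H
    rw [hmapeq, Nat.card_congr hker] at this
    exact_mod_cast congrArg (fun n : ℕ => (n : ℂ)) this
  have n1 : (Nat.card N : ℂ) ≠ 0 := card_ne_zero_C N
  have n2 : (Nat.card Hb : ℂ) ≠ 0 := card_ne_zero_C Hb
  rw [h6]
  exact coeff_calc2 _ _ _ n1 n2

end Rest

/-- For N ⊴ G, the monoid M(G/N), viewed inside the characters of G via
inflation, equals the intersection of M(G) with the functions factoring through G/N
(i.e. R_{G/N} = R_G ∩ K[x₁,…,x_s]). -/
theorem stmt_9 (N : Subgroup G) [N.Normal] [Fintype (G ⧸ N)] :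
    (fun f : (G ⧸ N) → ℂ => f ∘ QuotientGroup.mk) ''
        (AddSubmonoid.closure {f : (G ⧸ N) → ℂ | IsMonomialChar f} : Set ((G ⧸ N) → ℂ)) =
      (AddSubmonoid.closure {f : G → ℂ | IsMonomialChar f} : Set (G → ℂ)) ∩
        {f : G → ℂ | ∀ g : G, ∀ n ∈ N, f (g * n) = f g} := by
  ext f
  constructor
  · rintro ⟨fb, hfb, rfl⟩
    constructor
    · refine AddSubmonoid.closure_induction
        (motive := fun fb _ => (fb ∘ (QuotientGroup.mk : G → G ⧸ N)) ∈
          AddSubmonoid.closure {f : G → ℂ | IsMonomialChar f}) ?_ ?_ ?_ hfb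
      · rintro x ⟨Hb, lam, rfl⟩
        exact AddSubmonoid.subset_closure ⟨_, _, infl_monomial N Hb lam⟩
      · exact AddSubmonoid.zero_mem _
      · intro x y hx hy hx' hy'
        exact AddSubmonoid.add_mem _ hx' hy'
    · intro g n hn
      show fb (QuotientGroup.mk (g * n)) = fb (QuotientGroup.mk g)
      rw [QuotientGroup.mk_mul_of_mem g hn]
  · rintro ⟨hf, hinv⟩
    have key : ∃ fb ∈ AddSubmonoid.closure {f : (G ⧸ N) → ℂ | IsMonomialChar f},
        avgN N f = fb ∘ (QuotientGroup.mk : G → G ⧸ N) := by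
      refine AddSubmonoid.closure_induction
        (motive := fun f' _ => ∃ fb ∈ AddSubmonoid.closure {f : (G ⧸ N) → ℂ | IsMonomialChar f},
          avgN N f' = fb ∘ (QuotientGroup.mk : G → G ⧸ N)) ?_ ?_ ?_ hf
      · rintro x ⟨H, lam, rfl⟩
        by_cases hker : ∀ h : H, (h : G) ∈ N → lam h = 1
        · exact ⟨_, AddSubmonoid.subset_closure ⟨_, _, rfl⟩, avg_induced_of_ker N H lam hker⟩
        · exact ⟨0, AddSubmonoid.zero_mem _,
            by rw [avg_induced_of_not_ker N H lam hker]; rfl⟩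
      · exact ⟨0, AddSubmonoid.zero_mem _, by rw [avgN_zero]; rfl⟩
      · rintro x y hx hy ⟨fx, hfx, hex⟩ ⟨fy, hfy, hey⟩
        exact ⟨fx + fy, AddSubmonoid.add_mem _ hfx hfy,
          by rw [avgN_add, hex, hey]; rfl⟩
    obtain ⟨fb, hfb, he⟩ := key
    refine ⟨fb, hfb, ?_⟩
    show fb ∘ QuotientGroup.mk = f
    rw [← he, avgN_of_invariant N f hinv]
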